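/- arXiv:1301.4938 — 2 statements merged into one kernel-verified Lean document; each statement's English description precedes it below -/
import Mathlib

section
/- Let ι be an index type equipped with a relation < and, for every pair i < j, a coercion map c i j : ε i → ε j between the associated sorts, such that the coercions compose: for all i < j < k, c j k ∘ c i j = c i k. Then for every chain i = i₀ < i₁ < ⋯ < iₙ = j (n ≥ 1), the composite c iₙ₋₁ iₙ ∘ ⋯ ∘ c i₀ i₁ of the coercions along the chain is equal to the direct coercion c i j. In other words, the derivation system for coercive subtyping introduces no new coercions between atomic types: every composite of basic coercions between two base types equals the designated basic coercion between them. -/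
/-- A chain `i = i₀ < i₁ < ⋯ < iₙ = j` (with `n ≥ 1`) of indices related by `lt`. -/
inductive Chain {ι : Type*} (lt : ι → ι → Prop) : ι → ι → Type _
  | single {i j : ι} : lt i j → Chain lt i j
  | cons {i j k : ι} : lt i j → Chain lt j k → Chain lt i k

/-- The composite `c iₙ₋₁ iₙ ∘ ⋯ ∘ c i₀ i₁` of the coercions along a chain. -/
def Chain.comp {ι : Type*} {lt : ι → ι → Prop} {ε : ι → Type*}
    (c : ∀ i j, lt i j → ε i → ε j) :
    ∀ {i j : ι}, Chain lt i j → ε i → ε j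
  | _, _, .single h => c _ _ h
  | _, _, .cons h ch => ch.comp c ∘ c _ _ h

theorem Chain.lt_of {ι : Type*} {lt : ι → ι → Prop}
    (htrans : ∀ ⦃i j k : ι⦄, lt i j → lt j k → lt i k) :
    ∀ {i j : ι}, Chain lt i j → lt i j
  | _, _, .single h => h
  | _, _, .cons h ch => htrans h (ch.lt_of htrans)

/-- If the basic coercions compose (`c j k ∘ c i j = c i k` for all `i < j < k`),
then the composite of the coercions along any chain from `i` to `j` equals the
direct coercion `c i j`: the derivation system introduces no new coercions
between atomic types. -/
theorem chain_comp_eq_direct {ι : Type*} {lt : ι → ι → Prop} {ε : ι → Type*}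
    (c : ∀ i j, lt i j → ε i → ε j)
    (htrans : ∀ {i j k : ι}, lt i j → lt j k → lt i k)
    (hcomp : ∀ {i j k : ι} (h₁ : lt i j) (h₂ : lt j k) (h₃ : lt i k),
      c j k h₂ ∘ c i j h₁ = c i k h₃)
    {i j : ι} (ch : Chain lt i j) (hij : lt i j) :
    ch.comp c = c i j hij := by
  induction ch with
  | single h => rfl
  | cons h ch ih =>
      have hjk := Chain.lt_of (lt := lt) (fun _ _ _ a b => htrans a b) ch
      simp only [Chain.comp, ih hjk, hcomp h hjk hij]
end

section
/- Let Q be a quiver (directed graph) whose vertices are the base types, with an edge from i to j for each basic coercion, and let F be the prefunctor sending each vertex i to the sort ε i (an object of the category of types) and each edge from i to j to the basic coercion c i j : ε i → ε j. Assume the basic coercions satisfy the composition condition c j k ∘ c i j = c i k whenever the corresponding edges exist. Then the induced functor from the free (path) category on Q to the category of types maps any two parallel paths (paths with the same source i and the same target j, each of positive length) to the same function ε i → ε j, namely c i j. This expresses coherence for coercive subtyping: the free composition of basic coercions is, up to equality of functions, thin between base types. -/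
open CategoryTheory

private lemma edge_of_path {V : Type*} [Quiver V]
    (htrans : ∀ {i j k : V}, (i ⟶ j) → (j ⟶ k) → (i ⟶ k))
    {i : V} : ∀ {j : V} (p : Quiver.Path i j), 0 < p.length → Nonempty (i ⟶ j) := by
  intro j p
  induction p with
  | nil => simp
  | cons p' f ih =>
    intro _
    rcases Nat.eq_zero_or_pos p'.length with h0 | hpos
    · obtain ⟨rfl, rfl⟩ : ∃ h : _ = i, h ▸ p' = Quiver.Path.nil := by
        cases p' with
        | nil => exact ⟨rfl, rfl⟩
        | cons _ _ => simp [Quiver.Path.length] at h0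
      exact ⟨f⟩
    · exact ⟨htrans (ih hpos).some f⟩

private lemma lift_eq_map {V : Type*} [Quiver.{u_1 + 1} V]
    (F : V ⥤q Type u_1)
    (hsub : ∀ i j : V, Subsingleton (i ⟶ j))
    (htrans : ∀ {i j k : V}, (i ⟶ j) → (j ⟶ k) → (i ⟶ k))
    (hcomp : ∀ {i j k : V} (e : i ⟶ j) (f : j ⟶ k) (g : i ⟶ k),
      F.map f ∘ F.map e = F.map g)
    {i : V} : ∀ {j : V} (p : Quiver.Path i j), 0 < p.length →
      ∀ e : i ⟶ j, (Paths.lift F).map (X := (Paths.of V).obj i) (Y := (Paths.of V).obj j) p = F.map e := by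
  intro j p
  induction p with
  | nil => simp
  | cons p' f ih =>
    intro _ e
    erw [Paths.lift_cons]
    rcases Nat.eq_zero_or_pos p'.length with h0 | hpos
    · obtain ⟨rfl, rfl⟩ : ∃ h : _ = i, h ▸ p' = Quiver.Path.nil := by
        cases p' with
        | nil => exact ⟨rfl, rfl⟩
        | cons _ _ => simp [Quiver.Path.length] at h0
      show 𝟙 _ ≫ F.map f = F.map e
      rw [Category.id_comp]
      exact congrArg F.map ((hsub _ _).elim f e)
    · obtain ⟨g⟩ := edge_of_path htrans p' hpos
      erw [ih hpos g]
      apply ConcreteCategory.hom_injective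
      apply DFunLike.coe_injective
      calc F.map g ≫ F.map f = F.map f ∘ F.map g := rfl
        _ = F.map e := hcomp g f e

/-- Coherence for coercive subtyping, categorically: let `V` be a quiver whose
vertices are the base types, and let `F` be the prefunctor into the category of
types sending each vertex `i` to the sort `F.obj i` and each edge `e : i ⟶ j`
(a basic coercion) to the function `F.map e : F.obj i → F.obj j`.  Assume there
is at most one edge between any two vertices, that edges compose (transitivity
of the subtyping relation), and that the basic coercions compose:
`F.map f ∘ F.map e = F.map g` whenever the corresponding edges exist.  Then the
induced functor `Paths.lift F` from the free (path) category on `V` to the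
category of types maps any two parallel paths of positive length from `i` to
`j` to the same function, namely the basic coercion `F.map e` attached to the
edge `e : i ⟶ j`. -/
theorem paths_lift_coherence {V : Type*} [Quiver.{u_1 + 1} V]
    (F : V ⥤q Type u_1)
    (hsub : ∀ i j : V, Subsingleton (i ⟶ j))
    (htrans : ∀ {i j k : V}, (i ⟶ j) → (j ⟶ k) → (i ⟶ k))
    (hcomp : ∀ {i j k : V} (e : i ⟶ j) (f : j ⟶ k) (g : i ⟶ k),
      F.map f ∘ F.map e = F.map g)
    {i j : V} (p q : Quiver.Path i j) (hp : 0 < p.length) (hq : 0 < q.length)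
    (e : i ⟶ j) :
    (Paths.lift F).map (X := (Paths.of V).obj i) (Y := (Paths.of V).obj j) p = F.map e ∧
    (Paths.lift F).map (X := (Paths.of V).obj i) (Y := (Paths.of V).obj j) p =
      (Paths.lift F).map (X := (Paths.of V).obj i) (Y := (Paths.of V).obj j) q := by
  exact ⟨lift_eq_map F hsub htrans hcomp p hp e,
    (lift_eq_map F hsub htrans hcomp p hp e).trans
      (lift_eq_map F hsub htrans hcomp q hq e).symm⟩
end
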